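/- Let λ̂ := √(Σ₀/Δ)/(2σᵤ). Then S(λ̂) = λ̂, S is differentiable at λ̂ with S′(λ̂) = 0, and there exists ε > 0 such that for every λ⁽⁰⁾ with 0 < |λ⁽⁰⁾ − λ̂| < ε the iterates λ⁽ᵐ⁺¹⁾ := S(λ⁽ᵐ⁾) converge to λ̂ as m → ∞; i.e., for one trading period, Kyle's equilibrium is locally stable with respect to policy iterations for the market makers. -/

import Mathlib

open Filter

/-- The one-period policy-iteration map for the market makers:
`S(λ) = 2 λ Sig0/(Sig0 + 4 Δ σu² λ²)`. -/
noncomputable def S1p (Δ σu Sig0 lam : ℝ) : ℝ :=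
  2 * lam * Sig0 / (Sig0 + 4 * Δ * σu ^ 2 * lam ^ 2)

/-- With `λ̂ := √(Sig0/Δ)/(2 σu)`: `S(λ̂) = λ̂`, `S` is differentiable at `λ̂` with
`S'(λ̂) = 0`, and there is `ε > 0` such that every starting value `λ⁰` with
`0 < |λ⁰ - λ̂| < ε` has iterates `λ⁽ᵐ⁺¹⁾ := S(λ⁽ᵐ⁾)` converging to `λ̂`; i.e., for one
trading period Kyle's equilibrium is locally stable with respect to policy iterations
for the market makers. -/
theorem market_maker_one_period_locally_stable (Δ σu Sig0 : ℝ) (hΔ : 0 < Δ)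
    (hσ : 0 < σu) (hSig : 0 < Sig0) :
    S1p Δ σu Sig0 (Real.sqrt (Sig0 / Δ) / (2 * σu)) = Real.sqrt (Sig0 / Δ) / (2 * σu) ∧
    HasDerivAt (S1p Δ σu Sig0) 0 (Real.sqrt (Sig0 / Δ) / (2 * σu)) ∧
    ∃ ε > 0, ∀ lam0 : ℝ,
      0 < |lam0 - Real.sqrt (Sig0 / Δ) / (2 * σu)| →
      |lam0 - Real.sqrt (Sig0 / Δ) / (2 * σu)| < ε →
      Tendsto (fun m : ℕ => (S1p Δ σu Sig0)^[m] lam0) atTop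
        (nhds (Real.sqrt (Sig0 / Δ) / (2 * σu))) := by
  set L : ℝ := Real.sqrt (Sig0 / Δ) / (2 * σu) with hLdef
  set c : ℝ := 4 * Δ * σu ^ 2 with hcdef
  have hc : 0 < c := by positivity
  have hL : 0 < L := by
    apply div_pos (Real.sqrt_pos.2 (div_pos hSig hΔ)) (by positivity)
  have hsq : Real.sqrt (Sig0 / Δ) ^ 2 = Sig0 / Δ :=
    Real.sq_sqrt (le_of_lt (div_pos hSig hΔ))
  have hkey : Sig0 = c * L ^ 2 := by
    rw [hLdef, hcdef, div_pow, hsq]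
    field_simp
    ring
  have hden : ∀ lam : ℝ, 0 < Sig0 + c * lam ^ 2 := by
    intro lam; positivity
  have hS : ∀ lam : ℝ, S1p Δ σu Sig0 lam = 2 * lam * Sig0 / (Sig0 + c * lam ^ 2) := by
    intro lam; rfl
  -- key identity
  have key : ∀ lam : ℝ, S1p Δ σu Sig0 lam - L =
      -(c * L * (lam - L) ^ 2) / (Sig0 + c * lam ^ 2) := by
    intro lam
    rw [hS]
    rw [div_sub' (ne_of_gt (hden lam))]
    congr 1
    rw [hkey]; ring
  have hfix : S1p Δ σu Sig0 L = L := by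
    have := key L
    simp at this
    linarith [this]
  refine ⟨hfix, ?_, ?_⟩
  · -- derivative
    have h1 : HasDerivAt (fun lam : ℝ => 2 * lam * Sig0) (2 * Sig0) L := by
      simpa using ((hasDerivAt_id L).const_mul 2).mul_const Sig0
    have h2 : HasDerivAt (fun lam : ℝ => Sig0 + c * lam ^ 2) (2 * c * L) L := by
      have := ((hasDerivAt_pow 2 L).const_mul c).const_add Sig0
      simpa [mul_comm, mul_assoc, mul_left_comm] using this
    have hdiv := h1.div h2 (ne_of_gt (hden L))
    have heq : (2 * Sig0 * (Sig0 + c * L ^ 2) - 2 * L * Sig0 * (2 * c * L)) /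
        (Sig0 + c * L ^ 2) ^ 2 = 0 := by
      rw [hkey]; field_simp; ring
    have : HasDerivAt (S1p Δ σu Sig0)
        ((2 * Sig0 * (Sig0 + c * L ^ 2) - 2 * L * Sig0 * (2 * c * L)) /
          (Sig0 + c * L ^ 2) ^ 2) L := by
      exact hdiv
    rwa [heq] at this
  · -- convergence
    refine ⟨L / 2, by positivity, fun lam0 _ hlt => ?_⟩
    have hbound : ∀ lam : ℝ, |lam - L| ≤ L / 2 → |S1p Δ σu Sig0 lam - L| ≤ (1/2) * |lam - L| := by
      intro lam hlam
      rw [key, abs_div, abs_neg, abs_of_pos (hden lam)]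
      have h1 : |c * L * (lam - L) ^ 2| = c * L * |lam - L| ^ 2 := by
        rw [abs_mul, abs_of_pos (mul_pos hc hL), abs_pow]
      rw [h1]
      rw [div_le_iff₀ (hden lam)]
      have h3 : c * L * (L / 2) = Sig0 / 2 := by rw [hkey]; ring
      calc c * L * |lam - L| ^ 2 = (c * L * |lam - L|) * |lam - L| := by ring
        _ ≤ (Sig0 / 2) * |lam - L| := by
            apply mul_le_mul_of_nonneg_right _ (abs_nonneg _)
            calc c * L * |lam - L| ≤ c * L * (L / 2) := by
                  apply mul_le_mul_of_nonneg_left hlam (le_of_lt (mul_pos hc hL))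
              _ = Sig0 / 2 := h3
        _ ≤ (1/2) * |lam - L| * (Sig0 + c * lam ^ 2) := by
            nlinarith [mul_nonneg (mul_nonneg (le_of_lt hc) (sq_nonneg lam)) (abs_nonneg (lam - L))]
    have hlam0 : |lam0 - L| ≤ L / 2 := le_of_lt hlt
    have hiter : ∀ m : ℕ, |(S1p Δ σu Sig0)^[m] lam0 - L| ≤ (1/2)^m * |lam0 - L| := by
      intro m
      induction m with
      | zero => simp
      | succ n ih =>
        rw [Function.iterate_succ_apply']
        have hle : |(S1p Δ σu Sig0)^[n] lam0 - L| ≤ L / 2 := by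
          calc |(S1p Δ σu Sig0)^[n] lam0 - L| ≤ (1/2)^n * |lam0 - L| := ih
            _ ≤ 1 * |lam0 - L| := by
                apply mul_le_mul_of_nonneg_right _ (abs_nonneg _)
                exact pow_le_one₀ (by norm_num) (by norm_num)
            _ = |lam0 - L| := one_mul _
            _ ≤ L / 2 := hlam0
        calc |S1p Δ σu Sig0 ((S1p Δ σu Sig0)^[n] lam0) - L|
            ≤ (1/2) * |(S1p Δ σu Sig0)^[n] lam0 - L| := hbound _ hle
          _ ≤ (1/2) * ((1/2)^n * |lam0 - L|) := by
              apply mul_le_mul_of_nonneg_left ih (by norm_num)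
          _ = (1/2)^(n+1) * |lam0 - L| := by ring
    rw [tendsto_iff_norm_sub_tendsto_zero]
    simp only [Real.norm_eq_abs]
    apply squeeze_zero (fun m => abs_nonneg _) hiter
    have : Tendsto (fun m : ℕ => (1/2 : ℝ)^m * |lam0 - L|) atTop (nhds (0 * |lam0 - L|)) :=
      (tendsto_pow_atTop_nhds_zero_of_lt_one (by norm_num) (by norm_num)).mul_const _
    simpa using this
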